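/- Let n, p, m be real numbers with p > 1, n > p + 4p/(p-1), m ≥ m_cs := ((p-1)n - 2√((p-1)(n-1)) + 2 - p) / (n - (p+2) - 2√((n-1)/(p-1))), and n > mp/(m-(p-1)). Set β := p/(m-(p-1)) and λ* := β^{p-1}(n - βm). Then for every continuously differentiable ξ : ℝ → ℝ whose support is a compact subset of the open interval (0,1), one has λ*·m ∫_0^1 r^{n-1-p-β(p-2)} ξ(r)^2 dr ≤ (p-1) β^{p-2} ∫_0^1 r^{n+1-p-β(p-2)} ξ'(r)^2 dr. -/

import Mathlib

open MeasureTheory Set Real Filter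

private lemma integrable_aux {c d : ℝ} (γ : ℝ) (hc : 0 < c) {q : ℝ → ℝ} (hq : Continuous q)
    (h0 : ∀ r, r ∉ Icc c d → q r = 0) :
    Integrable (fun r : ℝ => r ^ γ * q r) := by
  have hcont : Continuous (fun r : ℝ => r ^ γ * q r) := by
    rw [continuous_iff_continuousAt]
    intro x
    rcases lt_or_ge x c with hx | hx
    · have hev : (fun r : ℝ => r ^ γ * q r) =ᶠ[nhds x] fun _ => (0:ℝ) := by
        filter_upwards [Iio_mem_nhds hx] with r hr
        rw [h0 r (fun h => absurd h.1 (not_le.mpr hr)), mul_zero]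
      exact continuousAt_const.congr hev.symm
    · exact (Real.continuousAt_rpow_const x γ
        (Or.inl (ne_of_gt (lt_of_lt_of_le hc hx)))).mul hq.continuousAt
  have hsupp : HasCompactSupport (fun r : ℝ => r ^ γ * q r) :=
    HasCompactSupport.intro isCompact_Icc (fun r hr => by rw [h0 r hr, mul_zero])
  exact hcont.integrable_of_hasCompactSupport hsupp

private lemma int_eq {c d : ℝ} (γ : ℝ) {q : ℝ → ℝ}
    (h0 : ∀ r, r ∉ Icc c d → q r = 0) {s : Set ℝ} (hs : Icc c d ⊆ s) :
    ∫ r in s, r ^ γ * q r = ∫ r : ℝ, r ^ γ * q r := by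
  apply setIntegral_eq_integral_of_forall_compl_eq_zero
  intro x hx
  rw [h0 x (fun h => hx (hs h)), mul_zero]

-- Hardy inequality step
private theorem hardy (e a : ℝ) (hae : a = e + 1) (ha : 0 < a)
    (ξ : ℝ → ℝ) (hξ : ContDiff ℝ 1 ξ) (hξc : IsCompact (tsupport ξ))
    (hξs : tsupport ξ ⊆ Ioo (0:ℝ) 1) :
    a^2 * ∫ r in Ioc (0:ℝ) 1, r ^ e * (ξ r) ^ 2
      ≤ 4 * ∫ r in Ioc (0:ℝ) 1, r ^ (e + 2) * (deriv ξ r) ^ 2 := by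
  obtain ⟨c, d, hc0, hcd, hd1, hsub⟩ :
      ∃ c d : ℝ, 0 < c ∧ c ≤ d ∧ d < 1 ∧ tsupport ξ ⊆ Icc c d := by
    rcases eq_empty_or_nonempty (tsupport ξ) with h | h
    · exact ⟨1/2, 1/2, by norm_num, le_rfl, by norm_num, h ▸ empty_subset _⟩
    · exact ⟨sInf (tsupport ξ), sSup (tsupport ξ), (hξs (hξc.sInf_mem h)).1,
        csInf_le_csSup h hξc.bddBelow hξc.bddAbove, (hξs (hξc.sSup_mem h)).2,
        hξc.isBounded.subset_Icc_sInf_sSup⟩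
  have hq0 : ∀ r, r ∉ Icc c d → ξ r = 0 :=
    fun r hr => image_eq_zero_of_notMem_tsupport (fun h => hr (hsub h))
  have hq0' : ∀ r, r ∉ Icc c d → deriv ξ r = 0 := by
    intro r hr
    by_contra h
    exact hr (hsub (support_deriv_subset h))
  have hξcont : Continuous ξ := hξ.continuous
  have hξ'cont : Continuous (deriv ξ) := hξ.continuous_deriv le_rfl
  have hq1 : ∀ r, r ∉ Icc c d → ξ r ^ 2 = 0 := fun r hr => by rw [hq0 r hr]; ring
  have hq2 : ∀ r, r ∉ Icc c d → deriv ξ r ^ 2 = 0 := fun r hr => by rw [hq0' r hr]; ring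
  have hq3 : ∀ r, r ∉ Icc c d → ξ r * deriv ξ r = 0 := fun r hr => by rw [hq0 r hr]; ring
  have hi1 : Integrable (fun r : ℝ => r ^ e * ξ r ^ 2) :=
    integrable_aux e hc0 (hξcont.pow 2) hq1
  have hi2 : Integrable (fun r : ℝ => r ^ (e+2) * deriv ξ r ^ 2) :=
    integrable_aux (e+2) hc0 (hξ'cont.pow 2) hq2
  have hi3 : Integrable (fun r : ℝ => r ^ a * (ξ r * deriv ξ r)) :=
    integrable_aux a hc0 (hξcont.mul hξ'cont) hq3
  set A := ∫ r in Ioc (0:ℝ) 1, r ^ e * (ξ r) ^ 2 with hA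
  set B := ∫ r in Ioc (0:ℝ) 1, r ^ (e + 2) * (deriv ξ r) ^ 2 with hB
  set C := ∫ r in Ioc (0:ℝ) 1, r ^ a * (ξ r * deriv ξ r) with hC
  have hIccsub : Icc c d ⊆ Ioc (0:ℝ) 1 := fun x hx => ⟨lt_of_lt_of_le hc0 hx.1, le_of_lt (lt_of_le_of_lt hx.2 hd1)⟩
  -- FTC: a * A + 2 * C = 0
  have hFTC : a * A + 2 * C = 0 := by
    set c' := c/2 with hc'
    set d' := (1+d)/2 with hd'
    have hc'0 : 0 < c' := by positivity
    have hc'c : c' < c := by rw [hc']; linarith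
    have hdd' : d < d' := by rw [hd']; linarith
    have hd'1 : d' < 1 := by rw [hd']; linarith
    have hc'd' : c' ≤ d' := by linarith
    have hIcc2 : Icc c d ⊆ Ioc c' d' := fun x hx => ⟨lt_of_lt_of_le hc'c hx.1, le_of_lt (lt_of_le_of_lt hx.2 hdd')⟩
    set G : ℝ → ℝ := fun r => a * (r ^ e * ξ r ^ 2) + 2 * (r ^ a * (ξ r * deriv ξ r)) with hG
    have hderiv : ∀ x ∈ uIcc c' d', HasDerivAt (fun r : ℝ => r ^ a * ξ r ^ 2) (G x) x := by
      intro x hx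
      rw [uIcc_of_le hc'd'] at hx
      have hx0 : x ≠ 0 := ne_of_gt (lt_of_lt_of_le hc'0 hx.1)
      have h1 : HasDerivAt (fun r : ℝ => r ^ a) (a * x ^ (a - 1)) x :=
        Real.hasDerivAt_rpow_const (Or.inl hx0)
      have h2 : HasDerivAt (fun r : ℝ => ξ r ^ 2) (2 * ξ x ^ 1 * deriv ξ x) x := by
        have := ((hξ.differentiable one_ne_zero) x).hasDerivAt
        have h' : HasDerivAt (fun r : ℝ => ξ r ^ 2) (((2:ℕ):ℝ) * ξ x ^ (2 - 1) * deriv ξ x) x := this.pow 2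
        simpa using h'
      have h3 : HasDerivAt (fun r : ℝ => r ^ a * ξ r ^ 2)
          (a * x ^ (a - 1) * ξ x ^ 2 + x ^ a * (2 * ξ x ^ 1 * deriv ξ x)) x := h1.mul h2
      rw [hG]
      convert h3 using 1
      rw [show a - 1 = e by rw [hae]; ring]
      ring
    have hGint : Integrable G := (hi1.const_mul a).add (hi3.const_mul 2)
    have h4 := intervalIntegral.integral_eq_sub_of_hasDerivAt hderiv hGint.intervalIntegrable
    have hz : (fun r : ℝ => r ^ a * ξ r ^ 2) d' - (fun r : ℝ => r ^ a * ξ r ^ 2) c' = 0 := by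
      simp only []
      rw [hq0 d' (fun h => absurd h.2 (not_le.mpr hdd')),
          hq0 c' (fun h => absurd h.1 (not_le.mpr hc'c))]
      ring
    rw [hz] at h4
    rw [intervalIntegral.integral_of_le hc'd'] at h4
    -- move to Ioc 0 1
    have hGzero : ∀ r, r ∉ Icc c d → a * ξ r ^ 2 + 2 * (r * (ξ r * deriv ξ r)) = 0 := by
      intro r hr; rw [hq0 r hr, hq0' r hr]; ring
    have e1 : ∫ r in Ioc c' d', G r = ∫ r : ℝ, G r := by
      apply setIntegral_eq_integral_of_forall_compl_eq_zero
      intro x hx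
      have hx' : x ∉ Icc c d := fun h => hx (hIcc2 h)
      rw [hG]; simp only []
      rw [hq0 x hx', hq0' x hx']; ring
    have e2 : ∫ r in Ioc (0:ℝ) 1, G r = ∫ r : ℝ, G r := by
      apply setIntegral_eq_integral_of_forall_compl_eq_zero
      intro x hx
      have hx' : x ∉ Icc c d := fun h => hx (hIccsub h)
      rw [hG]; simp only []
      rw [hq0 x hx', hq0' x hx']; ring
    have j1 : IntegrableOn (fun r : ℝ => a * (r ^ e * ξ r ^ 2)) (Ioc (0:ℝ) 1) volume :=
      (hi1.const_mul a).integrableOn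
    have j3 : IntegrableOn (fun r : ℝ => 2 * (r ^ a * (ξ r * deriv ξ r))) (Ioc (0:ℝ) 1) volume :=
      (hi3.const_mul 2).integrableOn
    have e3 : ∫ r in Ioc (0:ℝ) 1, G r = a * A + 2 * C := by
      rw [hG, hA, hC]
      rw [integral_add j1 j3, integral_const_mul, integral_const_mul]
    rw [← e3, e2, ← e1, ← h4]
  -- pointwise inequality and positivity
  have hpos : 0 ≤ a^2 * A + 4 * B + 4 * a * C := by
    have e4 : ∫ r in Ioc (0:ℝ) 1,
        (a^2 * (r ^ e * ξ r ^ 2) + 4 * (r ^ (e+2) * deriv ξ r ^ 2)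
          + 4 * a * (r ^ a * (ξ r * deriv ξ r))) = a^2 * A + 4 * B + 4 * a * C := by
      have k1 : IntegrableOn (fun r : ℝ => a^2 * (r ^ e * ξ r ^ 2)) (Ioc (0:ℝ) 1) volume :=
        (hi1.const_mul _).integrableOn
      have k2 : IntegrableOn (fun r : ℝ => 4 * (r ^ (e+2) * deriv ξ r ^ 2)) (Ioc (0:ℝ) 1) volume :=
        (hi2.const_mul _).integrableOn
      have k3 : IntegrableOn (fun r : ℝ => 4 * a * (r ^ a * (ξ r * deriv ξ r))) (Ioc (0:ℝ) 1) volume :=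
        (hi3.const_mul _).integrableOn
      have k12 : IntegrableOn (fun r : ℝ => a^2 * (r ^ e * ξ r ^ 2)
          + 4 * (r ^ (e+2) * deriv ξ r ^ 2)) (Ioc (0:ℝ) 1) volume := k1.add k2
      rw [hA, hB, hC]
      rw [integral_add k12 k3, integral_add k1 k2,
          integral_const_mul, integral_const_mul, integral_const_mul]
    rw [← e4]
    apply setIntegral_nonneg measurableSet_Ioc
    intro r hr
    have hr0 : 0 < r := hr.1
    have hra : r ^ a = r ^ e * r := by
      rw [hae, Real.rpow_add hr0, Real.rpow_one]
    have hre2 : r ^ (e + 2) = r ^ e * r ^ (2:ℕ) := by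
      rw [Real.rpow_add hr0, show (2:ℝ) = ((2:ℕ):ℝ) by norm_num, Real.rpow_natCast]
    have hT : 0 ≤ r ^ e := Real.rpow_nonneg hr0.le _
    calc (0:ℝ) ≤ r ^ e * (a * ξ r + 2 * (r * deriv ξ r))^2 := mul_nonneg hT (sq_nonneg _)
    _ = a^2 * (r ^ e * ξ r ^ 2) + 4 * (r ^ (e+2) * deriv ξ r ^ 2)
          + 4 * a * (r ^ a * (ξ r * deriv ξ r)) := by rw [hra, hre2]; ring
  nlinarith [hpos, hFTC, ha, mul_pos ha ha]
set_option maxHeartbeats 1000000 in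
theorem stmt14 (n p m : ℝ) (hp : 1 < p) (hn : p + 4 * p / (p - 1) < n)
    (hm : ((p - 1) * n - 2 * Real.sqrt ((p - 1) * (n - 1)) + 2 - p)
        / (n - (p + 2) - 2 * Real.sqrt ((n - 1) / (p - 1))) ≤ m)
    (hn' : m * p / (m - (p - 1)) < n)
    (β lam : ℝ) (hβ : β = p / (m - (p - 1))) (hlam : lam = β ^ (p - 1) * (n - β * m))
    (ξ : ℝ → ℝ) (hξ : ContDiff ℝ 1 ξ) (hξc : IsCompact (tsupport ξ))
    (hξs : tsupport ξ ⊆ Ioo (0:ℝ) 1) :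
    lam * m * ∫ r in Ioc (0:ℝ) 1, r ^ (n - 1 - p - β * (p - 2)) * (ξ r) ^ 2
      ≤ (p - 1) * β ^ (p - 2)
        * ∫ r in Ioc (0:ℝ) 1, r ^ (n + 1 - p - β * (p - 2)) * (deriv ξ r) ^ 2 := by
  -- algebraic preliminaries
  have hp1 : 0 < p - 1 := by linarith
  have hp0 : 0 < p := by linarith
  set s := Real.sqrt ((n - 1) / (p - 1)) with hs_def
  have hdiv : 0 < 4 * p / (p-1) := div_pos (by linarith) hp1
  have hn1 : (1:ℝ) < n := by linarith
  have hs0 : 0 ≤ s := Real.sqrt_nonneg _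
  have hs2 : (p-1) * s^2 = n - 1 := by
    rw [hs_def, Real.sq_sqrt (div_nonneg (by linarith) hp1.le)]
    field_simp
  have hu : 0 < (p-1)*(n-p) - 4*p := by
    have h := (div_lt_iff₀ hp1).mp (by linarith : 4*p/(p-1) < n - p)
    nlinarith [h]
  have hnp2 : 2 < n - p - 2 := by
    have : (4:ℝ) < 4*p/(p-1) := by
      rw [lt_div_iff₀ hp1]; nlinarith
    linarith
  have hR : 2 * s < n - p - 2 := by
    have h2 : s < (n-p-2)/2 := by
      rw [hs_def]
      apply (Real.sqrt_lt' (by linarith)).mpr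
      rw [div_lt_iff₀ hp1]
      nlinarith [hu, mul_pos hu hu]
    linarith
  have hsqrt_eq : Real.sqrt ((p-1)*(n-1)) = (p-1) * s := by
    rw [show (p-1)*(n-1) = ((p-1)*s)^2 by nlinarith [hs2]]
    exact Real.sqrt_sq (by positivity)
  rw [hsqrt_eq] at hm
  have hRpos : 0 < n - (p+2) - 2*s := by linarith
  have hm2 : (p-1) * (n - (p+2) - 2*s) + p^2 ≤ m * (n - (p+2) - 2*s) := by
    have h := (div_le_iff₀ hRpos).mp hm
    nlinarith [h]
  have hmp : p - 1 < m := by nlinarith [hm2, hRpos, mul_pos hp0 hp0]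
  have hmden : 0 < m - (p-1) := by linarith
  have hβpos : 0 < β := by rw [hβ]; positivity
  have hβm : β * (m - (p-1)) = p := by rw [hβ]; field_simp
  have hβp : β * p * (m - (p-1)) = p^2 := by rw [hβ]; field_simp
  have hX : 2 + 2*s ≤ n - p - β*p := by nlinarith [hm2, hmden, hβp]
  have ha : 0 < n - p - β*(p-2) := by nlinarith [hβpos, hs0, hX]
  have hfact : 0 ≤ (p-1) * ((n - p - β*p - 2) - 2*s) * ((n - p - β*p - 2) + 2*s) :=
    mul_nonneg (mul_nonneg hp1.le (by linarith)) (by linarith)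
  have hkey : 4 * (β*(p-1)+p) * (n - (β*(p-1)+p)) ≤ (p-1) * (n - p - β*(p-2))^2 := by
    have hid : (p-1)*(n - p - β*(p-2))^2 - 4*(β*(p-1)+p)*(n-(β*(p-1)+p)) =
        (p-1) * ((n - p - β*p - 2) - 2*s) * ((n - p - β*p - 2) + 2*s)
          + 4*((p-1)*s^2 - (n-1)) := by ring
    linarith [hfact, hs2, hid]
  have hβm' : β * m = β*(p-1) + p := by linear_combination hβm
  have hkey2 : 4 * (β*m) * (n - β*m) ≤ (p-1) * (n - p - β*(p-2))^2 := by
    rw [hβm']; exact hkey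
  -- Hardy
  have hH := hardy (n - 1 - p - β * (p - 2)) (n - p - β*(p-2)) (by ring) ha ξ hξ hξc hξs
  rw [show (n - 1 - p - β * (p - 2)) + 2 = n + 1 - p - β * (p - 2) from by ring] at hH
  set A := ∫ r in Ioc (0:ℝ) 1, r ^ (n - 1 - p - β * (p - 2)) * (ξ r) ^ 2 with hA
  set B := ∫ r in Ioc (0:ℝ) 1, r ^ (n + 1 - p - β * (p - 2)) * (deriv ξ r) ^ 2 with hB
  have hA0 : 0 ≤ A := by
    rw [hA]
    exact setIntegral_nonneg measurableSet_Ioc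
      (fun r hr => mul_nonneg (Real.rpow_nonneg hr.1.le _) (sq_nonneg _))
  have hβ2 : 0 ≤ β ^ (p-2) := Real.rpow_nonneg hβpos.le _
  have hrw : lam * m * 4 = β^(p-2) * (4*(β*m)*(n-β*m)) := by
    rw [hlam, show p - 1 = (p-2) + 1 from by ring, Real.rpow_add hβpos, Real.rpow_one]
    ring
  have hrwA : lam * m * 4 * A = β^(p-2) * (4*(β*m)*(n-β*m)) * A := by rw [hrw]
  have h1 : β^(p-2) * (4*(β*m)*(n-β*m)) * A ≤ β^(p-2) * ((p-1) * (n - p - β*(p-2))^2) * A :=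
    mul_le_mul_of_nonneg_right (mul_le_mul_of_nonneg_left hkey2 hβ2) hA0
  have h2 : (β^(p-2) * (p-1)) * ((n - p - β*(p-2))^2 * A) ≤ (β^(p-2) * (p-1)) * (4 * B) :=
    mul_le_mul_of_nonneg_left hH (mul_nonneg hβ2 hp1.le)
  nlinarith [hrwA, h1, h2]
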